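/- arXiv:1703.06605 — 2 statements merged into one kernel-verified Lean document; each statement's English description precedes it below -/
import Mathlib

section
/- Let C ∈ ℂ^{n×n} be Hermitian, and X feasible for the SDP: maximize trace(CX) subject to X Hermitian PSD with diag(X) = 1. If S(X) := Re(ddiag(CX)) - C is positive semidefinite, then X is optimal for this SDP, where ddiag sets off-diagonal entries to zero and Re takes real parts entrywise. -/
noncomputable section

namespace PhaseSync

open Complex

variable {n : ℕ}

/-- Euclidean (ℓ²) norm on `Fin n → ℂ`. -/
def l2norm (v : Fin n → ℂ) : ℝ :=
  Real.sqrt (∑ k, ‖v k‖ ^ 2)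

/-- Entrywise sup (ℓ∞) norm on `Fin n → ℂ`. -/
def linfnorm (v : Fin n → ℂ) : ℝ :=
  ⨆ k, ‖v k‖

/-- Hermitian inner product `x*y = ∑ₖ conj(xₖ) yₖ`. -/
def herm (x y : Fin n → ℂ) : ℂ :=
  ∑ k, (starRingEnd ℂ) (x k) * y k

/-- Distance up to a global phase: `d₂(x,y) = inf_θ ‖x e^{iθ} - y‖₂`. -/
def d2 (x y : Fin n → ℂ) : ℝ :=
  ⨅ θ : ℝ, l2norm (fun k => Complex.exp (θ * Complex.I) * x k - y k)

/-- Sup-norm distance up to a global phase. -/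
def dinf (x y : Fin n → ℂ) : ℝ :=
  ⨅ θ : ℝ, linfnorm (fun k => Complex.exp (θ * Complex.I) * x k - y k)

/-- ℓ² operator (spectral) norm of a matrix. -/
def opNorm (A : Matrix (Fin n) (Fin n) ℂ) : ℝ :=
  ⨆ u : {u : Fin n → ℂ // l2norm u = 1}, l2norm (A.mulVec u)

/-- Entrywise projection to the unit circle (on nonzero entries). -/
def proj (v : Fin n → ℂ) : Fin n → ℂ :=
  fun k => v k / ((‖v k‖ : ℝ) : ℂ)

/-- The rank-one matrix `z z*`. -/
def outer (z : Fin n → ℂ) : Matrix (Fin n) (Fin n) ℂ :=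
  Matrix.of fun i j => z i * (starRingEnd ℂ) (z j)

/-- The operator `ℒ v = (z*v/n) z + (σ/n) W v`. -/
def Lop (z : Fin n → ℂ) (σ : ℝ) (W : Matrix (Fin n) (Fin n) ℂ) (v : Fin n → ℂ) : Fin n → ℂ :=
  (herm z v / (n : ℂ)) • z + (σ / (n : ℝ)) • W.mulVec v

open scoped ComplexOrder

open Matrix in
lemma psd_diag_nonneg {m : ℕ} {A : Matrix (Fin m) (Fin m) ℂ} (hA : A.PosSemidef) (i : Fin m) :
    0 ≤ A i i := by
  have := hA.dotProduct_mulVec_nonneg (Pi.single i 1)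
  simpa [dotProduct, Matrix.mulVec, Pi.single_apply, Finset.sum_ite_eq,
    Finset.sum_ite_eq'] using this

open Matrix in
lemma psd_trace_nonneg {m : ℕ} {A B : Matrix (Fin m) (Fin m) ℂ}
    (hA : A.PosSemidef) (hB : B.PosSemidef) : 0 ≤ ((A * B).trace) := by
  obtain ⟨P, rfl⟩ : ∃ P : Matrix (Fin m) (Fin m) ℂ, B = Pᴴ * P := by
    open scoped MatrixOrder in exact CStarAlgebra.nonneg_iff_eq_star_mul_self.mp hB.nonneg
  have h : (A * (Pᴴ * P)).trace = (P * A * Pᴴ).trace := by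
    rw [← Matrix.mul_assoc, Matrix.trace_mul_cycle]
  rw [h]
  have hpsd := hA.mul_mul_conjTranspose_same P
  exact Finset.sum_nonneg fun i _ => psd_diag_nonneg hpsd i

/-- dual certificate sufficiency. If `S(X) = Re(ddiag(CX)) - C` is PSD,
then the feasible `X` is optimal for the SDP `max trace(CX), X ⪰ 0, diag X = 1`. -/
theorem stmt8 (n : ℕ) (C X : Matrix (Fin n) (Fin n) ℂ) (hC : C.IsHermitian)
    (hX : X.PosSemidef) (hXd : ∀ k, X k k = 1)
    (hS : (Matrix.diagonal (fun k => ((((C * X) k k).re : ℝ) : ℂ)) - C).PosSemidef) :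
    ∀ Y : Matrix (Fin n) (Fin n) ℂ, Y.PosSemidef → (∀ k, Y k k = 1) →
      ((C * Y).trace).re ≤ ((C * X).trace).re := by
  intro Y hY hYd
  set d : Fin n → ℂ := fun k => ((((C * X) k k).re : ℝ) : ℂ) with hd
  have htr : 0 ≤ ((Matrix.diagonal d - C) * Y).trace := psd_trace_nonneg hS hY
  have hexp : ((Matrix.diagonal d - C) * Y).trace = (∑ k, d k) - (C * Y).trace := by
    rw [Matrix.sub_mul, Matrix.trace_sub]
    congr 1
    rw [Matrix.trace]
    simp [Matrix.diag, Matrix.diagonal_mul, hYd]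
  rw [hexp] at htr
  have h0 : 0 ≤ ((∑ k, d k) - (C * Y).trace).re := htr.1
  have hsum : (∑ k, d k).re = ((C * X).trace).re := by
    rw [Matrix.trace]
    simp [hd, Matrix.diag, Complex.ofReal_sum]
  simp only [Complex.sub_re] at h0
  linarith

end PhaseSync
end
end

section
/- Let z ∈ ℂⁿ with unit-modulus entries, W, W' Hermitian, ℒx = (z*x/n)z + (σ/n)Wx and ℒ'y = (z*y/n)z + (σ/n)W'y. Suppose ‖x‖₂ = ‖y‖₂ = √n, d₂(x,z) ≤ ε₁√n, d₂(y,z) ≤ ε₂√n with ε₁, ε₂ ∈ (0,1/2), ‖Wx‖_∞ ≤ K₁√(n log n), ‖W'y‖_∞ ≤ K₂√(n log n). Set ε = max{ε₁²/2 + K₁σ√(log n/n), ε₂²/2 + K₂σ√(log n/n)}. If ε < 1, then every entry of ℒx and ℒ'y has modulus at least 1 - ε, and d₂(𝒫ℒx, 𝒫ℒ'y) ≤ (1-ε)^{-1} d₂(ℒx, ℒ'y). -/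
set_option maxHeartbeats 1000000


noncomputable section

namespace PhaseSync

open Complex

variable {n : ℕ}

lemma abs_herm_lower (n : ℕ) (z x : Fin n → ℂ) (hz : ∀ k, ‖z k‖ = 1)
    (hx : ∑ k, ‖x k‖ ^ 2 = (n : ℝ)) (t : ℝ) (ht : 0 ≤ t)
    (hd : d2 x z ≤ t) : (n : ℝ) - t ^ 2 / 2 ≤ ‖herm z x‖ := by
  set c := herm z x with hc
  have hlow : ∀ θ : ℝ, Real.sqrt (2 * n - 2 * ‖c‖) ≤
      l2norm (fun k => Complex.exp (θ * Complex.I) * x k - z k) := by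
    intro θ
    show Real.sqrt (2 * n - 2 * ‖c‖) ≤
      Real.sqrt (∑ k, ‖Complex.exp (θ * Complex.I) * x k - z k‖ ^ 2)
    apply Real.sqrt_le_sqrt
    set e := Complex.exp (θ * Complex.I) with he
    have habse : ‖e‖ = 1 := Complex.norm_exp_ofReal_mul_I θ
    have hsum : ∑ k, ‖e * x k - z k‖ ^ 2
        = 2 * n - 2 * (e * c).re := by
      have hterm : ∀ k, ‖e * x k - z k‖ ^ 2
          = ‖x k‖ ^ 2 + 1 - 2 * (e * ((starRingEnd ℂ) (z k) * x k)).re := by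
        intro k
        rw [Complex.sq_norm, Complex.normSq_sub]
        have h1 : Complex.normSq (e * x k) = Complex.normSq (x k) := by
          rw [Complex.normSq_mul, ← Complex.sq_norm e, habse]; ring
        have h2 : Complex.normSq (z k) = 1 := by
          rw [← Complex.sq_norm, hz k]; norm_num
        have h3 : (e * x k * (starRingEnd ℂ) (z k)).re
            = (e * ((starRingEnd ℂ) (z k) * x k)).re := by ring_nf
        rw [h1, h2, h3, ← Complex.sq_norm]
      rw [Finset.sum_congr rfl (fun k _ => hterm k)]
      rw [Finset.sum_sub_distrib, Finset.sum_add_distrib, hx]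
      simp only [Finset.sum_const, Finset.card_univ, Fintype.card_fin, nsmul_eq_mul, mul_one]
      have h4 : ∑ k, 2 * (e * ((starRingEnd ℂ) (z k) * x k)).re
          = 2 * (e * c).re := by
        rw [← Finset.mul_sum, ← Complex.re_sum, ← Finset.mul_sum, hc, herm]
      rw [h4]; ring
    rw [hsum]
    have hre : (e * c).re ≤ ‖c‖ := by
      calc (e * c).re ≤ ‖e * c‖ := Complex.re_le_norm _
        _ = ‖c‖ := by rw [norm_mul, habse, one_mul]
    linarith
  have h1 : Real.sqrt (2 * n - 2 * ‖c‖) ≤ t :=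
    le_trans (le_ciInf hlow) hd
  rcases le_or_gt (2 * (n : ℝ) - 2 * ‖c‖) 0 with h | h
  · nlinarith [sq_nonneg t]
  · have := (Real.sqrt_le_left ht).mp h1
    linarith

lemma key_unit (a b : ℂ) (hab : ‖a‖ ≤ ‖b‖) (ha : 0 < ‖a‖) :
    ‖a / (‖a‖ : ℂ) - b / (‖b‖ : ℂ)‖
      ≤ ‖a - b‖ / ‖a‖ := by
  set r := ‖a‖ with hr
  set s := ‖b‖ with hs
  have hs0 : 0 < s := lt_of_lt_of_le ha hab
  have hrne : (r : ℂ) ≠ 0 := by exact_mod_cast ne_of_gt ha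
  have hsne : (s : ℂ) ≠ 0 := by exact_mod_cast ne_of_gt hs0
  have h1 : a / (r : ℂ) - b / (s : ℂ) = ((s : ℂ) * a - (r : ℂ) * b) / ((r : ℂ) * (s : ℂ)) := by
    field_simp
  rw [h1, norm_div, norm_mul, Complex.norm_real, Complex.norm_real,
    Real.norm_eq_abs, Real.norm_eq_abs, abs_of_pos ha, abs_of_pos hs0]
  rw [div_le_div_iff₀ (by positivity) ha]
  have hRe : (a * (starRingEnd ℂ) b).re ≤ r * s := by
    calc (a * (starRingEnd ℂ) b).re ≤ ‖a * (starRingEnd ℂ) b‖ := Complex.re_le_norm _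
      _ = r * s := by rw [norm_mul, Complex.norm_conj]
  set R := (a * (starRingEnd ℂ) b).re with hR
  have key2 : Complex.normSq ((s : ℂ) * a - (r : ℂ) * b) ≤ s ^ 2 * Complex.normSq (a - b) := by
    rw [Complex.normSq_sub, Complex.normSq_sub]
    have e1 : Complex.normSq ((s : ℂ) * a) = s ^ 2 * r ^ 2 := by
      rw [Complex.normSq_mul, Complex.normSq_ofReal, ← Complex.sq_norm a, ← hr]; ring
    have e2 : Complex.normSq ((r : ℂ) * b) = r ^ 2 * s ^ 2 := by
      rw [Complex.normSq_mul, Complex.normSq_ofReal, ← Complex.sq_norm b, ← hs]; ring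
    have e3 : ((s : ℂ) * a * (starRingEnd ℂ) ((r : ℂ) * b)).re = s * r * R := by
      rw [map_mul]
      have h5 : (s : ℂ) * a * ((starRingEnd ℂ) ((r : ℝ) : ℂ) * (starRingEnd ℂ) b)
          = ((s * r : ℝ) : ℂ) * (a * (starRingEnd ℂ) b) := by
        rw [Complex.conj_ofReal]; push_cast; ring
      rw [h5, Complex.re_ofReal_mul]
    have e4 : Complex.normSq a = r ^ 2 := by rw [← Complex.sq_norm a, ← hr]
    have e5 : Complex.normSq b = s ^ 2 := by rw [← Complex.sq_norm b, ← hs]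
    rw [e1, e2, e3, e4, e5]
    nlinarith [mul_nonneg (mul_nonneg hs0.le (sub_nonneg.2 hab))
      (by nlinarith : (0:ℝ) ≤ s ^ 2 + r * s - 2 * R)]
  have habs : ‖(s : ℂ) * a - (r : ℂ) * b‖ ≤ s * ‖a - b‖ := by
    have h6 : ‖(s : ℂ) * a - (r : ℂ) * b‖ ^ 2 ≤ (s * ‖a - b‖) ^ 2 := by
      rw [Complex.sq_norm ((s : ℂ) * a - (r : ℂ) * b), mul_pow, Complex.sq_norm (a - b)]; exact key2
    have h7 : 0 ≤ s * ‖a - b‖ := by positivity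
    nlinarith [norm_nonneg ((s : ℂ) * a - (r : ℂ) * b)]
  calc ‖(s : ℂ) * a - (r : ℂ) * b‖ * r ≤ s * ‖a - b‖ * r :=
        mul_le_mul_of_nonneg_right habs ha.le
    _ = ‖a - b‖ * (r * s) := by ring

lemma key_lemma (a b : ℂ) (m : ℝ) (hm : 0 < m) (ha : m ≤ ‖a‖)
    (hb : m ≤ ‖b‖) :
    ‖a / (‖a‖ : ℂ) - b / (‖b‖ : ℂ)‖
      ≤ ‖a - b‖ / m := by
  rcases le_total (‖a‖) (‖b‖) with h | h
  · refine le_trans (key_unit a b h (lt_of_lt_of_le hm ha)) ?_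
    exact div_le_div_of_nonneg_left (norm_nonneg _) hm ha
  · have h0 := key_unit b a h (lt_of_lt_of_le hm hb)
    have hsym : ‖a / (‖a‖ : ℂ) - b / (‖b‖ : ℂ)‖
        = ‖b / (‖b‖ : ℂ) - a / (‖a‖ : ℂ)‖ :=
      norm_sub_rev _ _
    have hsym2 : ‖b - a‖ = ‖a - b‖ := norm_sub_rev _ _
    rw [hsym, ← hsym2]
    refine le_trans h0 ?_
    exact div_le_div_of_nonneg_left (norm_nonneg _) hm hb

/-- entrywise lower bounds on `ℒx`, `ℒ'y` and local contraction bound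
`d₂(𝒫ℒx, 𝒫ℒ'y) ≤ (1-ε)⁻¹ d₂(ℒx, ℒ'y)`. -/
theorem stmt13 (n : ℕ) (hn : 0 < n) (z : Fin n → ℂ) (hz : ∀ k, ‖z k‖ = 1)
    (W W' : Matrix (Fin n) (Fin n) ℂ) (hW : W.IsHermitian) (hW' : W'.IsHermitian)
    (σ : ℝ) (hσ : 0 ≤ σ) (x y : Fin n → ℂ) (K₁ K₂ ε₁ ε₂ : ℝ)
    (hK₁ : 0 < K₁) (hK₂ : 0 < K₂)
    (hε₁0 : 0 < ε₁) (hε₁ : ε₁ < 1 / 2) (hε₂0 : 0 < ε₂) (hε₂ : ε₂ < 1 / 2)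
    (hxn : l2norm x = Real.sqrt n) (hyn : l2norm y = Real.sqrt n)
    (hxz : d2 x z ≤ ε₁ * Real.sqrt n) (hyz : d2 y z ≤ ε₂ * Real.sqrt n)
    (hWx : linfnorm (W.mulVec x) ≤ K₁ * Real.sqrt (n * Real.log n))
    (hW'y : linfnorm (W'.mulVec y) ≤ K₂ * Real.sqrt (n * Real.log n))
    (ε : ℝ)
    (hεdef : ε = max (ε₁ ^ 2 / 2 + K₁ * σ * Real.sqrt (Real.log n / n))
                     (ε₂ ^ 2 / 2 + K₂ * σ * Real.sqrt (Real.log n / n)))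
    (hεlt : ε < 1) :
    (∀ k, 1 - ε ≤ ‖Lop z σ W x k‖ ∧ 1 - ε ≤ ‖Lop z σ W' y k‖) ∧
    d2 (proj (Lop z σ W x)) (proj (Lop z σ W' y)) ≤
      (1 - ε)⁻¹ * d2 (Lop z σ W x) (Lop z σ W' y) := by
  have hn' : (0 : ℝ) < n := Nat.cast_pos.mpr hn
  have hn1 : (1 : ℝ) ≤ n := Nat.one_le_cast.mpr hn
  have hlog : 0 ≤ Real.log n := Real.log_nonneg hn1
  have hsqrtn : (0:ℝ) < Real.sqrt n := Real.sqrt_pos.mpr hn'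
  have hsimp : Real.sqrt (↑n * Real.log n) / n = Real.sqrt (Real.log n / n) := by
    rw [Real.sqrt_mul (le_of_lt hn'), Real.sqrt_div hlog]
    rw [div_eq_div_iff hn'.ne' hsqrtn.ne']
    have h2 : Real.sqrt (n:ℝ) * Real.sqrt (n:ℝ) = (n:ℝ) := Real.mul_self_sqrt hn'.le
    linear_combination Real.sqrt (Real.log n) * h2
  have hεpos : 0 < ε := by
    have : 0 < ε₁ ^ 2 / 2 + K₁ * σ * Real.sqrt (Real.log n / n) := by positivity
    rw [hεdef]; exact lt_of_lt_of_le this (le_max_left _ _)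
  have hm : (0:ℝ) < 1 - ε := by linarith
  -- generic entrywise bound
  have hlb : ∀ (W₀ : Matrix (Fin n) (Fin n) ℂ) (x₀ : Fin n → ℂ) (K₀ ε₀ : ℝ),
      0 < K₀ → 0 < ε₀ →
      l2norm x₀ = Real.sqrt n → d2 x₀ z ≤ ε₀ * Real.sqrt n →
      linfnorm (W₀.mulVec x₀) ≤ K₀ * Real.sqrt (n * Real.log n) →
      ε₀ ^ 2 / 2 + K₀ * σ * Real.sqrt (Real.log n / n) ≤ ε →
      ∀ k, 1 - ε ≤ ‖Lop z σ W₀ x₀ k‖ := by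
    intro W₀ x₀ K₀ ε₀ hK₀ hε₀ hx₀n hx₀z hW₀ hεle k
    -- sum of squares = n
    have hx2 : ∑ j, ‖x₀ j‖ ^ 2 = (n : ℝ) := by
      have h0 : Real.sqrt (∑ j, ‖x₀ j‖ ^ 2) = Real.sqrt n := by
        unfold l2norm at hx₀n; exact hx₀n
      have h1 : 0 ≤ ∑ j, ‖x₀ j‖ ^ 2 := Finset.sum_nonneg fun j _ => sq_nonneg _
      calc ∑ j, ‖x₀ j‖ ^ 2
          = Real.sqrt (∑ j, ‖x₀ j‖ ^ 2) ^ 2 := (Real.sq_sqrt h1).symm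
        _ = Real.sqrt (n : ℝ) ^ 2 := by rw [h0]
        _ = (n : ℝ) := Real.sq_sqrt hn'.le
    have hherm : (n : ℝ) - (ε₀ * Real.sqrt n) ^ 2 / 2 ≤ ‖herm z x₀‖ :=
      abs_herm_lower n z x₀ hz hx2 _ (by positivity) hx₀z
    have hherm' : (n : ℝ) * (1 - ε₀ ^ 2 / 2) ≤ ‖herm z x₀‖ := by
      have : (ε₀ * Real.sqrt n) ^ 2 = ε₀ ^ 2 * n := by
        rw [mul_pow, Real.sq_sqrt hn'.le]
      nlinarith
    -- entrywise
    have hWk : ‖W₀.mulVec x₀ k‖ ≤ K₀ * Real.sqrt (n * Real.log n) := by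
      refine le_trans ?_ hW₀
      unfold linfnorm
      exact le_ciSup (f := fun j => ‖W₀.mulVec x₀ j‖)
        (Set.Finite.bddAbove (Set.finite_range _)) k
    have heval : Lop z σ W₀ x₀ k
        = herm z x₀ / (n : ℂ) * z k + ((σ / n : ℝ) : ℂ) * W₀.mulVec x₀ k := by
      simp only [Lop, Pi.add_apply, Pi.smul_apply, smul_eq_mul, Complex.real_smul]
    have htri : ‖herm z x₀ / (n : ℂ) * z k‖
        - ‖((σ / n : ℝ) : ℂ) * W₀.mulVec x₀ k‖
        ≤ ‖Lop z σ W₀ x₀ k‖ := by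
      rw [heval]
      have := norm_add_le (herm z x₀ / (n : ℂ) * z k + ((σ / n : ℝ) : ℂ) * W₀.mulVec x₀ k)
        (-(((σ / n : ℝ) : ℂ) * W₀.mulVec x₀ k))
      simp only [add_neg_cancel_right, norm_neg] at this
      linarith
    have e1 : ‖herm z x₀ / (n : ℂ) * z k‖ = ‖herm z x₀‖ / n := by
      rw [norm_mul, norm_div, hz k, mul_one, Complex.norm_natCast]
    have e2 : ‖((σ / n : ℝ) : ℂ) * W₀.mulVec x₀ k‖
        = σ / n * ‖W₀.mulVec x₀ k‖ := by
      rw [norm_mul, Complex.norm_real, Real.norm_eq_abs, _root_.abs_of_nonneg (show (0:ℝ) ≤ σ / (n:ℝ) by positivity)]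
    have hb2 : σ / n * ‖W₀.mulVec x₀ k‖ ≤ K₀ * σ * Real.sqrt (Real.log n / n) := by
      calc σ / n * ‖W₀.mulVec x₀ k‖
          ≤ σ / n * (K₀ * Real.sqrt (n * Real.log n)) := by
            apply mul_le_mul_of_nonneg_left hWk (by positivity)
        _ = K₀ * σ * (Real.sqrt (n * Real.log n) / n) := by ring
        _ = K₀ * σ * Real.sqrt (Real.log n / n) := by rw [hsimp]
    have hb1 : 1 - ε₀ ^ 2 / 2 ≤ ‖herm z x₀‖ / n := by
      rw [le_div_iff₀ hn']; nlinarith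
    calc 1 - ε ≤ 1 - ε₀ ^ 2 / 2 - K₀ * σ * Real.sqrt (Real.log n / n) := by linarith
      _ ≤ ‖herm z x₀‖ / n - σ / n * ‖W₀.mulVec x₀ k‖ := by
          linarith
      _ ≤ ‖Lop z σ W₀ x₀ k‖ := by rw [e1, e2] at htri; linarith
  have hεle1 : ε₁ ^ 2 / 2 + K₁ * σ * Real.sqrt (Real.log n / n) ≤ ε := hεdef ▸ le_max_left _ _
  have hεle2 : ε₂ ^ 2 / 2 + K₂ * σ * Real.sqrt (Real.log n / n) ≤ ε := hεdef ▸ le_max_right _ _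
  have hu := hlb W x K₁ ε₁ hK₁ hε₁0 hxn hxz hWx hεle1
  have hv := hlb W' y K₂ ε₂ hK₂ hε₂0 hyn hyz hW'y hεle2
  refine ⟨fun k => ⟨hu k, hv k⟩, ?_⟩
  -- contraction part
  set u := Lop z σ W x with hudef
  set v := Lop z σ W' y with hvdef
  have hθbound : ∀ θ : ℝ,
      l2norm (fun k => Complex.exp (θ * Complex.I) * proj u k - proj v k)
        ≤ (1 - ε)⁻¹ * l2norm (fun k => Complex.exp (θ * Complex.I) * u k - v k) := by
    intro θ
    set e := Complex.exp (θ * Complex.I) with he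
    have habse : ‖e‖ = 1 := Complex.norm_exp_ofReal_mul_I θ
    have hptw : ∀ k, ‖e * proj u k - proj v k‖
        ≤ ‖e * u k - v k‖ / (1 - ε) := by
      intro k
      have h1 : ‖e * u k‖ = ‖u k‖ := by
        rw [norm_mul, habse, one_mul]
      have h2 : e * proj u k = (e * u k) / ((‖e * u k‖ : ℝ) : ℂ) := by
        rw [h1, proj]; ring
      rw [h2]
      exact key_lemma (e * u k) (v k) (1 - ε) hm (h1 ▸ hu k) (hv k)
    show Real.sqrt (∑ k, ‖e * proj u k - proj v k‖ ^ 2)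
        ≤ (1 - ε)⁻¹ * Real.sqrt (∑ k, ‖e * u k - v k‖ ^ 2)
    have hsum : ∑ k, ‖e * proj u k - proj v k‖ ^ 2
        ≤ (∑ k, ‖e * u k - v k‖ ^ 2) / (1 - ε) ^ 2 := by
      rw [Finset.sum_div]
      apply Finset.sum_le_sum
      intro k _
      have := hptw k
      have h0 : (0:ℝ) ≤ ‖e * proj u k - proj v k‖ := norm_nonneg _
      calc ‖e * proj u k - proj v k‖ ^ 2
          ≤ (‖e * u k - v k‖ / (1 - ε)) ^ 2 := by
            apply pow_le_pow_left₀ h0 this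
        _ = ‖e * u k - v k‖ ^ 2 / (1 - ε) ^ 2 := by rw [div_pow]
    calc Real.sqrt (∑ k, ‖e * proj u k - proj v k‖ ^ 2)
        ≤ Real.sqrt ((∑ k, ‖e * u k - v k‖ ^ 2) / (1 - ε) ^ 2) :=
          Real.sqrt_le_sqrt hsum
      _ = Real.sqrt (∑ k, ‖e * u k - v k‖ ^ 2) / (1 - ε) := by
          rw [Real.sqrt_div (Finset.sum_nonneg fun _ _ => sq_nonneg _), Real.sqrt_sq hm.le]
      _ = (1 - ε)⁻¹ * Real.sqrt (∑ k, ‖e * u k - v k‖ ^ 2) := by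
          rw [inv_mul_eq_div]
  -- conclude via infimum
  have hbdd : BddBelow (Set.range fun θ : ℝ =>
      l2norm (fun k => Complex.exp (θ * Complex.I) * proj u k - proj v k)) := by
    refine ⟨0, ?_⟩
    rintro r ⟨θ, rfl⟩
    exact Real.sqrt_nonneg _
  have hstep : ∀ θ : ℝ, d2 (proj u) (proj v)
      ≤ (1 - ε)⁻¹ * l2norm (fun k => Complex.exp (θ * Complex.I) * u k - v k) := by
    intro θ
    exact le_trans (ciInf_le hbdd θ) (hθbound θ)
  have hfinal : (1 - ε) * d2 (proj u) (proj v) ≤ d2 u v := by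
    apply le_ciInf
    intro θ
    have := hstep θ
    rw [inv_mul_eq_div, le_div_iff₀ hm] at this
    linarith [this]
  rw [inv_mul_eq_div, le_div_iff₀ hm]
  linarith [hfinal]


end PhaseSync
end
end
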